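/- Let K ⊆ ℝ^m be a nonempty closed convex set containing 0, and fix λ ≥ 1. Then for any z ∈ ℝ^m, the norm of the Euclidean projection of z onto K is at most the norm of the Euclidean projection of z onto λK; that is, ‖P_K(z)‖₂ ≤ ‖P_{λK}(z)‖₂. -/

import Mathlib

open Pointwise
open scoped RealInnerProductSpace

/-- Projection lemma: for a nonempty closed convex set `K ⊆ ℝ^m` containing `0`
and `λ ≥ 1`, the Euclidean projection of any `z` onto `K` has norm at most that
of the projection of `z` onto `λ • K`. Projections are characterized as the
points of the set minimizing the Euclidean distance to `z`. -/
theorem projection_lemma {m : ℕ} (K : Set (EuclideanSpace ℝ (Fin m)))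
    (hKne : K.Nonempty) (hKcl : IsClosed K) (hKcv : Convex ℝ K) (hK0 : (0 : EuclideanSpace ℝ (Fin m)) ∈ K)
    (lam : ℝ) (hlam : 1 ≤ lam) (z : EuclideanSpace ℝ (Fin m))
    (p q : EuclideanSpace ℝ (Fin m))
    (hpK : p ∈ K) (hp : ∀ w ∈ K, ‖z - p‖ ≤ ‖z - w‖)
    (hqK : q ∈ lam • K) (hq : ∀ w ∈ lam • K, ‖z - q‖ ≤ ‖z - w‖) :
    ‖p‖ ≤ ‖q‖ := by
  have hlam0 : (0:ℝ) < lam := lt_of_lt_of_le one_pos hlam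
  obtain ⟨x, hxK, hxq⟩ := hqK
  have hx : lam⁻¹ • q ∈ K := by
    rw [← hxq, smul_smul, inv_mul_cancel₀ hlam0.ne', one_smul]; exact hxK
  have hqset : q ∈ lam • K := ⟨x, hxK, hxq⟩
  have hlp : lam • p ∈ lam • K := Set.smul_mem_smul_set hpK
  haveI : Nonempty K := ⟨⟨p, hpK⟩⟩
  haveI : Nonempty (lam • K : Set _) := ⟨⟨q, hqset⟩⟩
  have hpinf : ‖z - p‖ = ⨅ w : K, ‖z - w‖ := by
    apply le_antisymm
    · exact le_ciInf fun w => hp w w.2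
    · refine ciInf_le ⟨0, ?_⟩ (⟨p, hpK⟩ : K)
      rintro r ⟨w, rfl⟩
      exact norm_nonneg _
  have hqinf : ‖z - q‖ = ⨅ w : (lam • K : Set _), ‖z - w‖ := by
    apply le_antisymm
    · exact le_ciInf fun w => hq w w.2
    · refine ciInf_le ⟨0, ?_⟩ (⟨q, hqset⟩ : (lam • K : Set _))
      rintro r ⟨w, rfl⟩
      exact norm_nonneg _
  have h1 := (norm_eq_iInf_iff_real_inner_le_zero hKcv hpK).mp hpinf (lam⁻¹ • q) hx
  have h2 := (norm_eq_iInf_iff_real_inner_le_zero (hKcv.smul lam) hqset).mp hqinf (lam • p) hlp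
  have hcs : (inner ℝ p q : ℝ) ≤ ‖p‖ * ‖q‖ := real_inner_le_norm p q
  have h1' : (inner ℝ (z - p) (q - lam • p) : ℝ) ≤ 0 := by
    have heq : q - lam • p = lam • (lam⁻¹ • q - p) := by
      rw [smul_sub, smul_smul, mul_inv_cancel₀ hlam0.ne', one_smul]
    rw [heq, real_inner_smul_right]
    exact mul_nonpos_of_nonneg_of_nonpos hlam0.le h1
  have hc : (inner ℝ q p : ℝ) = inner ℝ p q := real_inner_comm p q
  have e1 : (inner ℝ z q : ℝ) - lam * (inner ℝ z p : ℝ) - (inner ℝ p q : ℝ) + lam * ‖p‖^2 ≤ 0 := by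
    have := h1'
    rw [inner_sub_left, inner_sub_right, inner_sub_right, real_inner_smul_right,
      real_inner_smul_right, real_inner_self_eq_norm_sq] at this
    linarith
  have e2 : lam * (inner ℝ z p : ℝ) - (inner ℝ z q : ℝ) - lam * (inner ℝ p q : ℝ) + ‖q‖^2 ≤ 0 := by
    have := h2
    rw [inner_sub_left, inner_sub_right, inner_sub_right, real_inner_smul_right,
      real_inner_smul_right, real_inner_self_eq_norm_sq, hc] at this
    linarith
  -- multiply e1 by lam and add e2
  have key : lam * ‖p‖^2 + ‖q‖^2 ≤ (1 + lam) * (inner ℝ p q : ℝ) := by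
    linarith
  by_contra hcon
  push_neg at hcon
  have hq0 : (0:ℝ) ≤ ‖q‖ := norm_nonneg q
  nlinarith [mul_pos (sub_pos.mpr hcon) (sub_pos.mpr (lt_of_lt_of_le hcon (le_mul_of_one_le_left (norm_nonneg p) hlam))), norm_nonneg p]
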